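/- arXiv:2508.15560 — 4 statements merged into one kernel-verified Lean document; each statement's English description precedes it below -/
import Mathlib

section
/- Let x_1, ..., x_N be real numbers with sum S, and let 1 ≤ k ≤ N−1. Then for any subset I ⊂ {1,...,N} with |I| = k, one has Σ_{i∈I} x_i ≥ (k/N)S − √(k(N−k)/N) · √(Σ_{i=1}^N (x_i − S/N)²). -/
theorem stmt_6 (N k : ℕ) (hk1 : 1 ≤ k) (hk2 : k ≤ N - 1)
    (x : Fin N → ℝ) (S : ℝ) (hS : ∑ i, x i = S)
    (I : Finset (Fin N)) (hI : I.card = k) :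
    ((k : ℝ) / N) * S -
        Real.sqrt ((k : ℝ) * (N - k) / N) *
          Real.sqrt (∑ i, (x i - S / N) ^ 2) ≤ ∑ i ∈ I, x i := by
  have hkN : k ≤ N := le_trans hk2 (Nat.sub_le N 1)
  have hN0 : 0 < N := lt_of_lt_of_le hk1 hkN
  have hNR : (N : ℝ) ≠ 0 := Nat.cast_ne_zero.mpr hN0.ne'
  set y : Fin N → ℝ := fun i => x i - S / N with hy
  set a : Fin N → ℝ := fun i => (if i ∈ I then (1:ℝ) else 0) - k / N with ha
  have hsumy : ∑ i, y i = 0 := by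
    simp only [hy, Finset.sum_sub_distrib, hS, Finset.sum_const,
      Finset.card_univ, Fintype.card_fin, nsmul_eq_mul]
    field_simp
    ring
  have hsum_ay : ∑ i, a i * y i = ∑ i ∈ I, x i - (k:ℝ)/N * S := by
    have h1 : ∑ i, a i * y i
        = ∑ i, ((if i ∈ I then (1:ℝ) else 0) * y i) - (k:ℝ)/N * ∑ i, y i := by
      rw [Finset.mul_sum, ← Finset.sum_sub_distrib]
      apply Finset.sum_congr rfl
      intro i _
      simp only [ha]
      split_ifs <;> ring
    rw [h1, hsumy, mul_zero, sub_zero]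
    simp only [ite_mul, one_mul, zero_mul]
    rw [Finset.sum_ite_mem, Finset.univ_inter]
    simp only [hy, Finset.sum_sub_distrib, Finset.sum_const, hI, nsmul_eq_mul]
    field_simp
  have hcardc : (Iᶜ : Finset (Fin N)).card = N - k := by
    rw [Finset.card_compl, hI, Fintype.card_fin]
  have hA : ∑ i, a i ^ 2 = (k : ℝ) * ((N:ℝ) - k) / N := by
    rw [← Finset.sum_add_sum_compl I]
    have h1 : ∑ i ∈ I, a i ^ 2 = (k:ℝ) * (1 - (k:ℝ)/N) ^ 2 := by
      have : ∀ i ∈ I, a i ^ 2 = (1 - (k:ℝ)/N) ^ 2 := fun i hi => by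
        simp only [ha]; rw [if_pos hi]
      rw [Finset.sum_congr rfl this, Finset.sum_const, hI, nsmul_eq_mul]
    have h2 : ∑ i ∈ Iᶜ, a i ^ 2 = ((N:ℝ) - k) * ((k:ℝ)/N) ^ 2 := by
      have : ∀ i ∈ Iᶜ, a i ^ 2 = ((k:ℝ)/N) ^ 2 := fun i hi => by
        simp only [ha]; rw [if_neg (Finset.mem_compl.mp hi)]; ring
      rw [Finset.sum_congr rfl this, Finset.sum_const, hcardc, nsmul_eq_mul,
        Nat.cast_sub hkN]
    rw [h1, h2]
    field_simp
    ring
  have hCS := Finset.sum_mul_sq_le_sq_mul_sq Finset.univ a y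
  have hB0 : 0 ≤ ∑ i, y i ^ 2 := Finset.sum_nonneg fun i _ => sq_nonneg _
  have hA0 : 0 ≤ ∑ i, a i ^ 2 := Finset.sum_nonneg fun i _ => sq_nonneg _
  have habs : |∑ i, a i * y i| ≤
      Real.sqrt ((k : ℝ) * ((N:ℝ) - k) / N) * Real.sqrt (∑ i, y i ^ 2) := by
    rw [← Real.sqrt_sq_eq_abs, ← hA, ← Real.sqrt_mul hA0]
    exact Real.sqrt_le_sqrt hCS
  have hlow : -(Real.sqrt ((k : ℝ) * ((N:ℝ) - k) / N) * Real.sqrt (∑ i, y i ^ 2))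
      ≤ ∑ i, a i * y i := neg_le_of_abs_le habs
  rw [hsum_ay] at hlow
  linarith
end

section
/- Let N ≥ 2, 1 ≤ k ≤ N−1, Λ = (ρ_1,...,ρ_N) ∈ ℝ^N with ρ_1 ≤ ... ≤ ρ_N and T = Σ ρ_i, and β_k = (1/N)(1 − √(k/((N−1)(N−k)))). If the shifted vector Λ_{β_k} := Λ − β_k(T,...,T) satisfies σ_1(Λ_{β_k}) > 0 and σ_2(Λ_{β_k}) > 0, then ρ_1 + ρ_2 + ... + ρ_k > 0. -/
noncomputable def sigma1 (N : ℕ) (a : Fin N → ℝ) : ℝ := ∑ i, a i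

noncomputable def sigma2 (N : ℕ) (a : Fin N → ℝ) : ℝ :=
  ∑ i, ∑ j ∈ Finset.univ.filter (fun j => i < j), a i * a j

noncomputable def beta (N k : ℕ) : ℝ :=
  (1 / N) * (1 - Real.sqrt ((k : ℝ) / (((N : ℝ) - 1) * ((N : ℝ) - k))))

open Finset in
lemma sq_sum_eq_aux (N : ℕ) (a : Fin N → ℝ) :
    (∑ i, a i) ^ 2 = (∑ i, (a i) ^ 2) + 2 * sigma2 N a := by
  have h1 : (∑ i, a i) ^ 2 = ∑ i, ∑ j, a i * a j := by
    rw [sq, Finset.sum_mul_sum]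
  have hsplit : ∀ i : Fin N, (∑ j, a i * a j) =
      (∑ j ∈ univ.filter (fun j => i < j), a i * a j)
      + ((a i)^2 + ∑ j ∈ univ.filter (fun j => j < i), a i * a j) := by
    intro i
    rw [← Finset.sum_filter_add_sum_filter_not univ (fun j => i < j) (fun j => a i * a j)]
    congr 1
    have : univ.filter (fun j => ¬ i < j) = insert i (univ.filter (fun j => j < i)) := by
      ext j
      simp [not_lt, le_iff_lt_or_eq, or_comm, eq_comm]
    rw [this, Finset.sum_insert (by simp), sq]
  have hswap : (∑ i, ∑ j ∈ univ.filter (fun j => j < i), a i * a j) = sigma2 N a := by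
    rw [Finset.sum_comm' (t' := univ) (s' := fun j => univ.filter (fun i => j < i))
      (by intro x y; simp)]
    unfold sigma2
    exact Finset.sum_congr rfl fun j _ => Finset.sum_congr rfl fun i _ => mul_comm _ _
  rw [h1]
  simp only [hsplit, Finset.sum_add_distrib, hswap]
  unfold sigma2
  ring

set_option maxHeartbeats 1000000 in
theorem stmt_8 (N k : ℕ) (hN : 2 ≤ N) (hk1 : 1 ≤ k) (hk2 : k ≤ N - 1)
    (ρ : Fin N → ℝ) (hmono : ∀ i j : Fin N, i ≤ j → ρ i ≤ ρ j)
    (T : ℝ) (hT : T = ∑ i, ρ i)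
    (h1 : 0 < sigma1 N (fun i => ρ i - beta N k * T))
    (h2 : 0 < sigma2 N (fun i => ρ i - beta N k * T)) :
    0 < ∑ i ∈ Finset.univ.filter (fun i : Fin N => (i : ℕ) < k), ρ i := by
  classical
  set a : Fin N → ℝ := fun i => ρ i - beta N k * T with ha
  -- basic numeric facts
  have hNr : (2:ℝ) ≤ (N:ℝ) := by exact_mod_cast hN
  have hkr1 : (1:ℝ) ≤ (k:ℝ) := by exact_mod_cast hk1
  have hkN : (k:ℝ) ≤ (N:ℝ) - 1 := by
    have h : k + 1 ≤ N := by omega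
    have h' : (k:ℝ) + 1 ≤ (N:ℝ) := by exact_mod_cast h
    linarith
  have hD : (0:ℝ) < ((N:ℝ) - 1) * ((N:ℝ) - (k:ℝ)) := by nlinarith
  set D : ℝ := ((N:ℝ) - 1) * ((N:ℝ) - (k:ℝ)) with hDdef
  set s : ℝ := Real.sqrt ((k:ℝ) / D) with hs
  set s' : ℝ := Real.sqrt ((k:ℝ) * D) with hs'
  have hspos : 0 < s := Real.sqrt_pos.mpr (by positivity)
  have hs'pos : 0 < s' := Real.sqrt_pos.mpr (by positivity)
  have hs'2 : s' ^ 2 = (k:ℝ) * D := Real.sq_sqrt (by positivity)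
  have hss' : s * s' = (k:ℝ) := by
    rw [hs, hs', ← Real.sqrt_mul (by positivity)]
    have h : (k:ℝ) / D * ((k:ℝ) * D) = (k:ℝ) ^ 2 := by
      field_simp
    rw [h, Real.sqrt_sq (by positivity)]
  have hNne : (N:ℝ) ≠ 0 := by positivity
  -- sigma1 of a
  have hσ1 : sigma1 N a = s * T := by
    unfold sigma1
    rw [ha]
    simp only [Finset.sum_sub_distrib, Finset.sum_const, Finset.card_univ, Fintype.card_fin,
      nsmul_eq_mul]
    rw [beta, ← hT, ← hDdef, ← hs]
    field_simp
    ring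
  set σ1 : ℝ := sigma1 N a with hσ1def
  have hσ1pos : 0 < σ1 := h1
  have hTpos : 0 < T := by
    by_contra h
    push_neg at h
    nlinarith [hσ1]
  -- the index sets
  set S : Finset (Fin N) := Finset.univ.filter (fun i : Fin N => (i : ℕ) < k) with hS
  have hcardS : S.card = k := by
    have hb : S.card = (Finset.range k).card := by
      apply Finset.card_bij (fun (i : Fin N) _ => (i : ℕ))
      · intro i hi
        rw [hS] at hi
        simp only [Finset.mem_filter] at hi
        simp [Finset.mem_range, hi.2]
      · intro i _ j _ h; exact Fin.ext h
      · intro b hb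
        simp only [Finset.mem_range] at hb
        have hbN : b < N := by omega
        refine ⟨⟨b, hbN⟩, ?_, rfl⟩
        rw [hS]; simp [hb]
    rw [hb, Finset.card_range]
  have hcardS' : (Finset.univ.filter (fun i : Fin N => (i : ℕ) < k)).card = k := by
    rw [← hS]; exact hcardS
  have hcardSc : (Finset.univ.filter (fun i : Fin N => ¬ (i : ℕ) < k)).card = N - k := by
    have h := Finset.card_filter_add_card_filter_not
      (s := (Finset.univ : Finset (Fin N))) (p := fun i : Fin N => (i : ℕ) < k)
    rw [Finset.card_univ, Fintype.card_fin, hcardS'] at h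
    omega
  set A : ℝ := ∑ i ∈ S, a i with hA
  set B : ℝ := ∑ i ∈ Finset.univ.filter (fun i : Fin N => ¬ (i : ℕ) < k), a i with hB
  have hAB : A + B = σ1 := by
    rw [hA, hB, hσ1def]
    unfold sigma1
    exact Finset.sum_filter_add_sum_filter_not _ _ _
  set QS : ℝ := ∑ i ∈ S, (a i) ^ 2 with hQS
  set QSc : ℝ := ∑ i ∈ Finset.univ.filter (fun i : Fin N => ¬ (i : ℕ) < k), (a i) ^ 2 with hQSc
  -- Cauchy-Schwarz
  have hCS1 : A ^ 2 ≤ (k:ℝ) * QS := by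
    have h := sq_sum_le_card_mul_sum_sq (s := S) (f := a)
    rwa [hcardS] at h
  have hCS2 : B ^ 2 ≤ ((N:ℝ) - (k:ℝ)) * QSc := by
    have h := sq_sum_le_card_mul_sum_sq
      (s := Finset.univ.filter (fun i : Fin N => ¬ (i : ℕ) < k)) (f := a)
    rw [hcardSc] at h
    have hc : ((N - k : ℕ) : ℝ) = (N:ℝ) - (k:ℝ) := by
      have hkn : k ≤ N := by omega
      push_cast [Nat.cast_sub hkn]; ring
    rwa [hc] at h
  have hQ : QS + QSc < σ1 ^ 2 := by
    have hid := sq_sum_eq_aux N a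
    have hsplit := Finset.sum_filter_add_sum_filter_not Finset.univ
      (fun i : Fin N => (i : ℕ) < k) (fun i => (a i) ^ 2)
    rw [hQS, hQSc, hsplit, hσ1def]
    unfold sigma1
    nlinarith [h2, hid]
  -- rewrite the goal
  have hgoal : (∑ i ∈ S, ρ i) = A + (k:ℝ) * (beta N k * T) := by
    rw [hA, ha]
    rw [Finset.sum_sub_distrib, Finset.sum_const, hcardS, nsmul_eq_mul]
    ring
  rw [hgoal]
  have hbeta : beta N k = (1 / (N:ℝ)) * (1 - s) := by rw [beta, ← hDdef, ← hs]
  rw [hbeta]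
  -- now forget all definitions, pure arithmetic remains
  have hDdef0 : D = ((N:ℝ) - 1) * ((N:ℝ) - (k:ℝ)) := hDdef
  have hσ1T : σ1 = s * T := hσ1
  clear h1 h2 hT hmono hσ1
  clear_value QSc QS B A S σ1 s' s D a
  clear hS hA hB hQS hQSc hσ1def hDdef hs hs' ha
  -- quadratic root bound: N*A - k*σ1 + s'*σ1 > 0
  have hmk : (0:ℝ) < (N:ℝ) - (k:ℝ) := by linarith
  have hkpos : (0:ℝ) < (k:ℝ) := by linarith
  have hNpos : (0:ℝ) < (N:ℝ) := by linarith
  have hkey : 0 < (N:ℝ) * A - (k:ℝ) * σ1 + s' * σ1 := by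
    by_contra hcon
    push_neg at hcon
    have hB' : B = σ1 - A := by linarith
    have e1 : ((N:ℝ) - (k:ℝ)) * A ^ 2 ≤ ((N:ℝ) - (k:ℝ)) * ((k:ℝ) * QS) :=
      mul_le_mul_of_nonneg_left hCS1 hmk.le
    have e2 : (k:ℝ) * B ^ 2 ≤ (k:ℝ) * (((N:ℝ) - (k:ℝ)) * QSc) :=
      mul_le_mul_of_nonneg_left hCS2 hkpos.le
    have e3 : (k:ℝ) * ((N:ℝ) - (k:ℝ)) * (QS + QSc) < (k:ℝ) * ((N:ℝ) - (k:ℝ)) * σ1 ^ 2 :=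
      mul_lt_mul_of_pos_left hQ (mul_pos hkpos hmk)
    have step1 : ((N:ℝ) - (k:ℝ)) * A ^ 2 + (k:ℝ) * B ^ 2 < (k:ℝ) * ((N:ℝ) - (k:ℝ)) * σ1 ^ 2 := by
      linarith [e1, e2, e3]
    have step2 := mul_lt_mul_of_pos_left step1 hNpos
    rw [hB'] at step2
    have hfac : ((N:ℝ) * A - (k:ℝ) * σ1 - s' * σ1) * ((N:ℝ) * A - (k:ℝ) * σ1 + s' * σ1) < 0 := by
      have expand : ((N:ℝ) * A - (k:ℝ) * σ1 - s' * σ1) * ((N:ℝ) * A - (k:ℝ) * σ1 + s' * σ1)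
          = ((N:ℝ) * A - (k:ℝ) * σ1) ^ 2 - s' ^ 2 * σ1 ^ 2 := by ring
      rw [expand, hs'2, hDdef0]
      nlinarith [step2, sq_nonneg ((N:ℝ) * A - (k:ℝ) * σ1)]
    have hf1 : (N:ℝ) * A - (k:ℝ) * σ1 - s' * σ1 < 0 := by
      nlinarith [mul_pos hs'pos hσ1pos]
    have hprod : 0 ≤ ((N:ℝ) * A - (k:ℝ) * σ1 - s' * σ1) * ((N:ℝ) * A - (k:ℝ) * σ1 + s' * σ1) := by
      nlinarith [mul_nonneg (neg_nonneg.mpr hf1.le) (neg_nonneg.mpr hcon)]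
    linarith
  -- conclude: A + k * ((1/N)*(1-s) * T) > 0 using σ1 = s*T, s*s' = k
  have hfin : 0 < (N:ℝ) * (A + (k:ℝ) * (1 / (N:ℝ) * (1 - s) * T)) := by
    have hexp : (N:ℝ) * (A + (k:ℝ) * (1 / (N:ℝ) * (1 - s) * T))
        = (N:ℝ) * A + (k:ℝ) * (1 - s) * T := by
      field_simp
    rw [hexp]
    rw [hσ1T] at hkey
    have hss'T : s * s' * T = (k:ℝ) * T := by rw [hss']
    nlinarith [hkey, hss'T]
  nlinarith [hfin, hNpos]
end

section
/- Let N ≥ 2, 1 ≤ k ≤ N−1, Λ = (ρ_1,...,ρ_N) ∈ ℝ^N with ρ_1 ≤ ... ≤ ρ_N and T = Σ ρ_i, and β_k = (1/N)(1 − √(k/((N−1)(N−k)))). If the shifted vector Λ_{β_k} := Λ − β_k(T,...,T) satisfies σ_1(Λ_{β_k}) ≥ 0 and σ_2(Λ_{β_k}) ≥ 0, then either ρ_1 + ... + ρ_k > 0, or ρ_1 = ... = ρ_k = 0 and ρ_{k+1} = ... = ρ_N ≥ 0. -/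
lemma var_id {ι : Type*} (s : Finset ι) (f : ι → ℝ) :
    ∑ i ∈ s, ∑ j ∈ s, (f i - f j)^2
      = 2 * ((s.card : ℝ) * ∑ i ∈ s, f i ^ 2 - (∑ i ∈ s, f i)^2) := by
  have h : ∀ i ∈ s, ∑ j ∈ s, (f i - f j)^2
      = (s.card : ℝ) * f i ^ 2 + ∑ j ∈ s, f j ^ 2 - 2 * f i * ∑ j ∈ s, f j := by
    intro i _
    have h2 : ∀ j ∈ s, (f i - f j)^2 = f i ^2 + f j^2 - 2 * f i * f j := fun j _ => by ring
    rw [Finset.sum_congr rfl h2, Finset.sum_sub_distrib, Finset.sum_add_distrib,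
      Finset.sum_const, Finset.mul_sum, nsmul_eq_mul]
  calc ∑ i ∈ s, ∑ j ∈ s, (f i - f j)^2
      = ∑ i ∈ s, ((s.card : ℝ) * f i ^ 2 + ∑ j ∈ s, f j ^ 2 - 2 * f i * ∑ j ∈ s, f j) :=
        Finset.sum_congr rfl h
    _ = ((s.card:ℝ) * ∑ i ∈ s, f i^2 + (s.card:ℝ) * ∑ j ∈ s, f j^2)
          - (2 * ∑ i ∈ s, f i) * (∑ j ∈ s, f j) := by
        rw [Finset.sum_sub_distrib, Finset.sum_add_distrib, Finset.sum_const, nsmul_eq_mul,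
          ← Finset.mul_sum, ← Finset.sum_mul, ← Finset.mul_sum]
    _ = _ := by ring

lemma cs_ineq {ι : Type*} (s : Finset ι) (f : ι → ℝ) :
    (∑ i ∈ s, f i)^2 ≤ (s.card : ℝ) * ∑ i ∈ s, f i ^ 2 := by
  have h := var_id s f
  have h0 : (0:ℝ) ≤ ∑ i ∈ s, ∑ j ∈ s, (f i - f j)^2 :=
    Finset.sum_nonneg fun i _ => Finset.sum_nonneg fun j _ => sq_nonneg _
  linarith

lemma cs_eq {ι : Type*} (s : Finset ι) (f : ι → ℝ)
    (h : (s.card : ℝ) * ∑ i ∈ s, f i ^ 2 = (∑ i ∈ s, f i)^2) :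
    ∀ i ∈ s, ∀ j ∈ s, f i = f j := by
  have hv := var_id s f
  rw [h, sub_self, mul_zero] at hv
  intro i hi j hj
  have h1 := (Finset.sum_eq_zero_iff_of_nonneg
    (fun i _ => Finset.sum_nonneg fun j _ => sq_nonneg (f i - f j))).mp hv i hi
  have h2 := (Finset.sum_eq_zero_iff_of_nonneg (fun j _ => sq_nonneg (f i - f j))).mp h1 j hj
  have := pow_eq_zero_iff (n := 2) (by norm_num) |>.mp h2
  linarith

lemma sigma2_id (N : ℕ) (a : Fin N → ℝ) :
    2 * sigma2 N a = (∑ i, a i)^2 - ∑ i, (a i)^2 := by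
  have h2 : sigma2 N a = ∑ i : Fin N, ∑ j : Fin N, if i < j then a i * a j else 0 := by
    unfold sigma2
    exact Finset.sum_congr rfl fun i _ => Finset.sum_filter _ _
  have h3 : (∑ i : Fin N, ∑ j : Fin N, if j < i then a i * a j else 0) = sigma2 N a := by
    rw [Finset.sum_comm, h2]
    refine Finset.sum_congr rfl fun i _ => Finset.sum_congr rfl fun j _ => ?_
    rw [mul_comm]
  have h4 : (∑ i : Fin N, ∑ j : Fin N, if i = j then a i * a j else 0) = ∑ i, (a i)^2 := by
    refine Finset.sum_congr rfl fun i _ => ?_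
    simp [Finset.sum_ite_eq, sq]
  have h1 : (∑ i, a i)^2 = ∑ i : Fin N, ∑ j : Fin N, a i * a j := by
    rw [sq, Finset.sum_mul_sum]
  have tri : ∀ i j : Fin N, a i * a j =
      (if i < j then a i * a j else 0) + (if j < i then a i * a j else 0)
        + (if i = j then a i * a j else 0) := by
    intro i j
    rcases lt_trichotomy i j with h | h | h
    · simp [h, asymm h, h.ne]
    · simp [h, lt_irrefl]
    · simp [h, asymm h, h.ne']
  rw [h1, Finset.sum_congr rfl fun i _ => Finset.sum_congr rfl fun j _ => tri i j]
  simp only [Finset.sum_add_distrib]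
  rw [h3, h4, h2]
  ring

theorem stmt_9 (N k : ℕ) (hN : 2 ≤ N) (hk1 : 1 ≤ k) (hk2 : k ≤ N - 1)
    (ρ : Fin N → ℝ) (hmono : ∀ i j : Fin N, i ≤ j → ρ i ≤ ρ j)
    (T : ℝ) (hT : T = ∑ i, ρ i)
    (h1 : 0 ≤ sigma1 N (fun i => ρ i - beta N k * T))
    (h2 : 0 ≤ sigma2 N (fun i => ρ i - beta N k * T)) :
    (0 < ∑ i ∈ Finset.univ.filter (fun i : Fin N => (i : ℕ) < k), ρ i) ∨
      ((∀ i : Fin N, (i : ℕ) < k → ρ i = 0) ∧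
        (∀ i j : Fin N, k ≤ (i : ℕ) → k ≤ (j : ℕ) → ρ i = ρ j) ∧
        (∀ i : Fin N, k ≤ (i : ℕ) → 0 ≤ ρ i)) := by
  have hkN : k < N := by omega
  set n : ℝ := (N : ℝ) with hn
  set kr : ℝ := (k : ℝ) with hkr
  have hn2 : (2:ℝ) ≤ n := by rw [hn]; exact_mod_cast hN
  have hkr1 : (1:ℝ) ≤ kr := by rw [hkr]; exact_mod_cast hk1
  have hkn1 : kr + 1 ≤ n := by rw [hkr, hn]; exact_mod_cast (by omega : k + 1 ≤ N)
  have hn0 : (0:ℝ) < n := by linarith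
  have hm1 : (1:ℝ) ≤ n - kr := by linarith
  set s : ℝ := Real.sqrt (kr * ((n-1)*(n-kr))) with hsdef
  have hargpos : 0 < kr * ((n-1)*(n-kr)) := by
    apply mul_pos (by linarith) (mul_pos (by linarith) (by linarith))
  have hspos : 0 < s := Real.sqrt_pos.2 hargpos
  have hs2 : s^2 = kr * ((n-1)*(n-kr)) := Real.sq_sqrt hargpos.le
  have hsqrt : Real.sqrt (kr / ((n-1)*(n-kr))) = kr / s := by
    have h : (kr/s)^2 = kr/((n-1)*(n-kr)) := by
      rw [div_pow, hs2, sq, mul_div_mul_left _ _ (by linarith : kr ≠ 0)]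
    rw [← h, Real.sqrt_sq (by positivity)]
  have hbeta : beta N k = (1/n) * (1 - kr/s) := by
    unfold beta
    rw [← hn, ← hkr, hsqrt]
  clear_value s n kr
  clear hsdef hargpos
  set a : Fin N → ℝ := fun i => ρ i - beta N k * T with ha
  set S : ℝ := ∑ i, a i with hSdef
  have hS : S = (kr/s) * T := by
    rw [hSdef, ha]
    rw [Finset.sum_sub_distrib, Finset.sum_const, Finset.card_univ, Fintype.card_fin,
      nsmul_eq_mul, ← hT, hbeta, ← hn]
    field_simp
    ring
  have hS0 : 0 ≤ S := h1
  have hT0 : 0 ≤ T := by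
    by_contra hneg
    push_neg at hneg
    have : S < 0 := by
      rw [hS]
      exact mul_neg_of_pos_of_neg (by positivity) hneg
    linarith
  set s₁ : Finset (Fin N) := Finset.univ.filter (fun i : Fin N => (i : ℕ) < k) with hs₁
  set s₂ : Finset (Fin N) := Finset.univ.filter (fun i : Fin N => ¬ (i : ℕ) < k) with hs₂
  have hcard1 : s₁.card = k := by
    have : s₁ = Finset.Iio (⟨k, hkN⟩ : Fin N) := by
      ext i
      simp [hs₁, Fin.lt_def]
    rw [this, Fin.card_Iio]
  have hcard2 : s₂.card = N - k := by
    have : s₂ = (Finset.Iio (⟨k, hkN⟩ : Fin N))ᶜ := by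
      ext i
      simp [hs₂, Fin.lt_def]
    rw [this, Finset.card_compl, Fin.card_Iio, Fintype.card_fin]
  have hcard1r : (s₁.card : ℝ) = kr := by rw [hcard1, hkr]
  have hcard2r : (s₂.card : ℝ) = n - kr := by
    rw [hcard2, hn, hkr, Nat.cast_sub hkN.le]
  set P : ℝ := ∑ i ∈ s₁, a i with hP
  set Q : ℝ := ∑ i ∈ s₂, a i with hQ
  set A : ℝ := ∑ i ∈ s₁, a i ^ 2 with hA
  set B : ℝ := ∑ i ∈ s₂, a i ^ 2 with hB
  have hPQ : P + Q = S := Finset.sum_filter_add_sum_filter_not _ _ _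
  have hAB : A + B = ∑ i, a i ^ 2 := Finset.sum_filter_add_sum_filter_not _ _ _
  have d1 : A + B ≤ S^2 := by
    have hid := sigma2_id N a
    rw [← hSdef] at hid
    rw [hAB]
    linarith
  have d2 : P^2 ≤ kr * A := by
    have := cs_ineq s₁ a
    rwa [hcard1r, ← hA, ← hP] at this
  have d3 : Q^2 ≤ (n - kr) * B := by
    have := cs_ineq s₂ a
    rwa [hcard2r, ← hB, ← hQ] at this
  clear_value P Q A B S
  have key : (n*P - kr*S)^2 + n*((kr*(n-kr))*(S^2 - (A+B)) + (n-kr)*(kr*A - P^2)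
      + kr*((n-kr)*B - Q^2)) = (s*S)^2 := by
    rw [mul_pow, hs2, ← hPQ]
    ring
  have c1 : 0 ≤ (kr*(n-kr))*(S^2 - (A+B)) :=
    mul_nonneg (mul_nonneg (by linarith) (by linarith)) (by linarith)
  have c2 : 0 ≤ (n-kr)*(kr*A - P^2) := mul_nonneg (by linarith) (by linarith)
  have c3 : 0 ≤ kr*((n-kr)*B - Q^2) := mul_nonneg (by linarith) (by linarith)
  have hle : (n*P - kr*S)^2 ≤ (s*S)^2 := by
    have hc : 0 ≤ n * ((kr*(n-kr))*(S^2 - (A+B)) + (n-kr)*(kr*A - P^2)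
        + kr*((n-kr)*B - Q^2)) := mul_nonneg hn0.le (by linarith)
    linarith
  have hnPge : -(s*S) ≤ n*P - kr*S :=
    (abs_le_of_sq_le_sq' hle (by positivity)).1
  set F : ℝ := ∑ i ∈ s₁, ρ i with hFdef
  have hF : F = P + kr * (beta N k * T) := by
    rw [hFdef, hP, ha]
    rw [Finset.sum_sub_distrib, Finset.sum_const, nsmul_eq_mul, hcard1r]
    ring
  clear_value F
  have hnF : n * F = (n*P - kr*S) + s*S := by
    rw [hF, hbeta, hS]
    field_simp
    ring
  have hF0 : 0 ≤ F := by
    by_contra hneg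
    push_neg at hneg
    have : n * F < 0 := mul_neg_of_pos_of_neg hn0 hneg
    linarith
  rcases hF0.lt_or_eq with hpos | heq
  · exact Or.inl hpos
  · right
    have hFz : F = 0 := heq.symm
    have hnPeq : n*P - kr*S = -(s*S) := by
      rw [hFz, mul_zero] at hnF
      linarith
    have hsqeq : (n*P - kr*S)^2 = (s*S)^2 := by rw [hnPeq]; ring
    have hsum0 : (kr*(n-kr))*(S^2 - (A+B)) + (n-kr)*(kr*A - P^2)
        + kr*((n-kr)*B - Q^2) = 0 := by
      have hz : n * ((kr*(n-kr))*(S^2 - (A+B)) + (n-kr)*(kr*A - P^2)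
          + kr*((n-kr)*B - Q^2)) = 0 := by linarith
      rcases mul_eq_zero.mp hz with h | h
      · linarith
      · exact h
    have hc2z : (n-kr)*(kr*A - P^2) = 0 := by linarith
    have hd2 : kr * A = P^2 := by
      rcases mul_eq_zero.mp hc2z with h | h
      · linarith
      · linarith
    have hc3z : kr*((n-kr)*B - Q^2) = 0 := by linarith
    have hd3 : (n - kr) * B = Q^2 := by
      rcases mul_eq_zero.mp hc3z with h | h
      · linarith
      · linarith
    have hconst1 : ∀ i ∈ s₁, ∀ j ∈ s₁, a i = a j := by
      apply cs_eq
      rw [hcard1r, ← hA, ← hP]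
      exact hd2
    have hconst2 : ∀ i ∈ s₂, ∀ j ∈ s₂, a i = a j := by
      apply cs_eq
      rw [hcard2r, ← hB, ← hQ]
      exact hd3
    have hrho1 : ∀ i ∈ s₁, ∀ j ∈ s₁, ρ i = ρ j := by
      intro i hi j hj
      have h2 : ρ i - beta N k * T = ρ j - beta N k * T := hconst1 i hi j hj
      linarith only [h2]
    have hrho2 : ∀ i ∈ s₂, ∀ j ∈ s₂, ρ i = ρ j := by
      intro i hi j hj
      have h2 : ρ i - beta N k * T = ρ j - beta N k * T := hconst2 i hi j hj
      linarith only [h2]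
    have hmem1 : ∀ i : Fin N, (i : ℕ) < k → i ∈ s₁ := by
      intro i hi
      simp [hs₁, hi]
    have hmem2 : ∀ i : Fin N, k ≤ (i : ℕ) → i ∈ s₂ := by
      intro i hi
      simp only [hs₂, Finset.mem_filter, Finset.mem_univ, true_and, not_lt]
      exact hi
    have hzero : ∀ i : Fin N, (i : ℕ) < k → ρ i = 0 := by
      intro i hi
      have hFi : F = kr * ρ i := by
        rw [hFdef]
        rw [Finset.sum_congr rfl fun j hj => hrho1 j hj i (hmem1 i hi)]
        rw [Finset.sum_const, nsmul_eq_mul, hcard1r]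
      rw [hFz] at hFi
      rcases mul_eq_zero.mp hFi.symm with h | h
      · exact absurd h (by linarith)
      · exact h
    refine ⟨hzero, ?_, ?_⟩
    · intro i j hi hj
      exact hrho2 i (hmem2 i hi) j (hmem2 j hj)
    · intro i hi
      have hj0 : (k - 1 : ℕ) < N := by omega
      set j0 : Fin N := ⟨k - 1, hj0⟩ with hj0def
      have hv : (j0 : ℕ) = k - 1 := rfl
      have hz : ρ j0 = 0 := hzero j0 (by omega)
      have hle' : j0 ≤ i := by
        rw [Fin.le_def, hv]
        omega
      have := hmono j0 i hle'
      linarith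
end

section
/- Let N ≥ 2, 1 ≤ k ≤ N−1, c > 0, and let Λ ∈ ℝ^N be the vector whose first k entries are 0 and whose remaining N−k entries all equal c, so T = (N−k)c. With β_k = (1/N)(1 − √(k/((N−1)(N−k)))) and Λ_{β_k} = Λ − β_k(T,...,T), one has σ_1(Λ_{β_k}) > 0 and σ_2(Λ_{β_k}) = 0. -/
lemma two_sigma2 (N : ℕ) (a : Fin N → ℝ) :
    2 * sigma2 N a = (sigma1 N a)^2 - ∑ i, (a i)^2 := by
  classical
  have h1 : (sigma1 N a)^2 = ∑ i, ∑ j, a i * a j := by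
    rw [sigma1, sq, Fintype.sum_mul_sum]
  have hsplit : ∀ i : Fin N, ∑ j, a i * a j =
      (∑ j ∈ Finset.univ.filter (fun j => i < j), a i * a j)
      + (∑ j ∈ Finset.univ.filter (fun j => ¬ i < j), a i * a j) :=
    fun i => (Finset.sum_filter_add_sum_filter_not _ _ _).symm
  have h2 : ∑ i, ∑ j, a i * a j = sigma2 N a
      + ∑ i, ∑ j ∈ Finset.univ.filter (fun j => ¬ i < j), a i * a j := by
    rw [sigma2, ← Finset.sum_add_distrib]
    exact Finset.sum_congr rfl fun i _ => hsplit i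
  have h3 : ∀ i : Fin N, Finset.univ.filter (fun j => ¬ i < j)
      = insert i (Finset.univ.filter (fun j : Fin N => j < i)) := by
    intro i
    ext j
    simp [not_lt, le_iff_lt_or_eq, or_comm, eq_comm]
  have h4 : ∑ i, ∑ j ∈ Finset.univ.filter (fun j => ¬ i < j), a i * a j
      = (∑ i, (a i)^2) + ∑ i, ∑ j ∈ Finset.univ.filter (fun j : Fin N => j < i), a i * a j := by
    rw [← Finset.sum_add_distrib]
    refine Finset.sum_congr rfl fun i _ => ?_
    rw [h3 i, Finset.sum_insert (by simp), sq]
  have h5 : ∑ i, ∑ j ∈ Finset.univ.filter (fun j : Fin N => j < i), a i * a j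
      = sigma2 N a := by
    rw [sigma2]
    rw [Finset.sum_comm' (s' := fun j => Finset.univ.filter (fun i : Fin N => j < i))
      (t' := Finset.univ) (by intro x y; simp)]
    exact Finset.sum_congr rfl fun j _ => Finset.sum_congr rfl fun i _ => mul_comm _ _
  rw [h1, h2, h4, h5]; ring

lemma sum_ite_lt (N k : ℕ) (hk : k ≤ N) (x y : ℝ) :
    ∑ i : Fin N, (if (i : ℕ) < k then x else y) = k * x + ((N : ℝ) - k) * y := by
  classical
  rw [Fin.sum_univ_eq_sum_range (fun i => if i < k then x else y)]
  induction N with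
  | zero => simp at hk; simp [hk]
  | succ n ih =>
    rw [Finset.sum_range_succ]
    rcases Nat.lt_or_ge n k with h | h
    · have hk' : k = n + 1 := le_antisymm hk h
      subst hk'
      have hall : ∀ i ∈ Finset.range n, (if i < n + 1 then x else y) = x := by
        intro i hi
        exact if_pos (by have := Finset.mem_range.mp hi; omega)
      rw [Finset.sum_congr rfl hall, Finset.sum_const, if_pos (Nat.lt_succ_self n)]
      push_cast
      simp [nsmul_eq_mul]
      ring
    · rw [ih h, if_neg (not_lt.mpr h)]
      push_cast; ring

theorem stmt_10 (N k : ℕ) (hN : 2 ≤ N) (hk1 : 1 ≤ k) (hk2 : k ≤ N - 1)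
    (c : ℝ) (hc : 0 < c)
    (Λ : Fin N → ℝ) (hΛ : ∀ i : Fin N, Λ i = if (i : ℕ) < k then 0 else c)
    (T : ℝ) (hT : T = ((N : ℝ) - k) * c) :
    0 < sigma1 N (fun i => Λ i - beta N k * T) ∧
      sigma2 N (fun i => Λ i - beta N k * T) = 0 := by
  have hkN : k + 1 ≤ N := by omega
  have hn : (2 : ℝ) ≤ N := by exact_mod_cast hN
  have hκ1 : (1 : ℝ) ≤ (k : ℝ) := by exact_mod_cast hk1
  have hκn : (k : ℝ) + 1 ≤ N := by exact_mod_cast hkN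
  set n : ℝ := (N : ℝ) with hn'
  set κ : ℝ := (k : ℝ) with hκ'
  have hnκ : (1 : ℝ) ≤ n - κ := by linarith
  have hn1 : (0 : ℝ) < n - 1 := by linarith
  set s : ℝ := Real.sqrt (κ / ((n - 1) * (n - κ))) with hs'
  have hspos : 0 < s := Real.sqrt_pos.mpr (by positivity)
  have hs2 : s ^ 2 = κ / ((n - 1) * (n - κ)) := Real.sq_sqrt (by positivity)
  have hβ : beta N k = (1 / n) * (1 - s) := rfl
  have hT0 : 0 < T := by rw [hT]; positivity
  -- sums
  have hA : ∑ i : Fin N, (Λ i - beta N k * T) = T - n * (beta N k * T) := by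
    have : ∀ i : Fin N, Λ i - beta N k * T
        = if (i : ℕ) < k then (0 - beta N k * T) else (c - beta N k * T) := by
      intro i; rw [hΛ i]; split <;> ring
    rw [Finset.sum_congr rfl (fun i _ => this i),
      sum_ite_lt N k (by omega) _ _, hT]
    ring
  have hB : ∑ i : Fin N, (Λ i - beta N k * T)^2
      = κ * (beta N k * T)^2 + (n - κ) * (c - beta N k * T)^2 := by
    have : ∀ i : Fin N, (Λ i - beta N k * T)^2
        = if (i : ℕ) < k then (beta N k * T)^2 else (c - beta N k * T)^2 := by
      intro i; rw [hΛ i]; split <;> ring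
    rw [Finset.sum_congr rfl (fun i _ => this i), sum_ite_lt N k (by omega) _ _]
  have hσ1 : sigma1 N (fun i => Λ i - beta N k * T) = s * T := by
    rw [sigma1, hA, hβ]
    have hnne : n ≠ 0 := by linarith
    field_simp
    ring
  constructor
  · rw [hσ1]; positivity
  · have h2 := two_sigma2 N (fun i => Λ i - beta N k * T)
    rw [hσ1, hB] at h2
    have hcT : c = T / (n - κ) := by rw [hT]; field_simp
    have hnκne : n - κ ≠ 0 := by linarith
    have hnne : n ≠ 0 := by linarith
    have hzero : (n - 1) * (n - κ) * s ^ 2 - κ = 0 := by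
      rw [hs2]; field_simp; ring
    have key2 : n ^ 2 * ((s * T)^2 - (κ * (beta N k * T)^2 + (n - κ) * (c - beta N k * T)^2))
        = c ^ 2 * (n - κ) * n * ((n - 1) * (n - κ) * s ^ 2 - κ) := by
      rw [hβ, hT]
      field_simp
      ring
    rw [hzero, mul_zero] at key2
    have hn2 : (n : ℝ) ^ 2 ≠ 0 := by positivity
    have hkey : (s * T)^2 - (κ * (beta N k * T)^2 + (n - κ) * (c - beta N k * T)^2) = 0 :=
      (mul_eq_zero.mp key2).resolve_left hn2
    linarith [h2, hkey]
end
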